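/- Let n be a positive integer and let x, y_1, …, y_n be vectors in H. Then ∑_{i=1}^n |(x, y_i)|^2 ≤ ‖x‖ · max_{1≤i≤n} |(x, y_i)| · (∑_{i=1}^n ∑_{j=1}^n |(y_i, y_j)|)^{1/2}. -/

import Mathlib

theorem stmt_17 {H : Type*} [NormedAddCommGroup H] [InnerProductSpace ℂ H]
    {n : ℕ} (hn : 0 < n) (x : H) (y : Fin n → H) :
    (∑ i, (‖((inner ℂ x (y i) : ℂ))‖) ^ 2) ≤ ‖x‖ * (Finset.univ.sup' (Finset.univ_nonempty_iff.mpr (Fin.pos_iff_nonempty.mp hn)) (fun i => ‖((inner ℂ x (y i) : ℂ))‖)) * (∑ i, ∑ j, ‖((inner ℂ (y i) (y j) : ℂ))‖) ^ ((1 : ℝ) / 2) := by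
  set M := Finset.univ.sup' (Finset.univ_nonempty_iff.mpr (Fin.pos_iff_nonempty.mp hn)) (fun i => ‖((inner ℂ x (y i) : ℂ))‖) with hM
  set T := ∑ i, ∑ j, ‖((inner ℂ (y i) (y j) : ℂ))‖ with hT
  set c : Fin n → ℂ := fun i => starRingEnd ℂ (inner ℂ x (y i)) with hc
  set z := ∑ i, c i • y i with hz
  obtain ⟨i0⟩ := Fin.pos_iff_nonempty.mp hn
  have hle : ∀ i, ‖((inner ℂ x (y i) : ℂ))‖ ≤ M :=
    fun i => Finset.le_sup' (fun i => ‖((inner ℂ x (y i) : ℂ))‖) (Finset.mem_univ i)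
  have hMnn : 0 ≤ M := le_trans (norm_nonneg _) (hle i0)
  have hTnn : 0 ≤ T := Finset.sum_nonneg fun i _ => Finset.sum_nonneg fun j _ => norm_nonneg _
  have hSnn : 0 ≤ ∑ i, (‖((inner ℂ x (y i) : ℂ))‖) ^ 2 :=
    Finset.sum_nonneg fun i _ => sq_nonneg _
  have hxz : (inner ℂ x z : ℂ) = ((∑ i, (‖((inner ℂ x (y i) : ℂ))‖) ^ 2 : ℝ) : ℂ) := by
    rw [hz, inner_sum]
    push_cast
    refine Finset.sum_congr rfl fun i _ => ?_
    rw [inner_smul_right, hc, Complex.conj_mul']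
  have key1 : (∑ i, (‖((inner ℂ x (y i) : ℂ))‖) ^ 2) ≤ ‖x‖ * ‖z‖ := by
    have h := norm_inner_le_norm (𝕜 := ℂ) x z
    rw [hxz, Complex.norm_real, Real.norm_eq_abs, abs_of_nonneg hSnn] at h
    exact h
  have hzz : ‖z‖ ^ 2 ≤ M ^ 2 * T := by
    have h1 : ‖z‖ ^ 2 = ‖((inner ℂ z z : ℂ))‖ := by
      rw [inner_self_eq_norm_sq_to_K (𝕜 := ℂ) z]
      rw [norm_pow]
      simp [abs_of_nonneg (norm_nonneg z)]
    rw [h1]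
    have h2 : (inner ℂ z z : ℂ) = ∑ i, ∑ j, starRingEnd ℂ (c i) * (c j * (inner ℂ (y i) (y j) : ℂ)) := by
      rw [hz, sum_inner]
      refine Finset.sum_congr rfl fun i _ => ?_
      rw [inner_smul_left, inner_sum, Finset.mul_sum]
      refine Finset.sum_congr rfl fun j _ => ?_
      rw [inner_smul_right]
    rw [h2]
    calc ‖(∑ i, ∑ j, starRingEnd ℂ (c i) * (c j * (inner ℂ (y i) (y j) : ℂ)))‖
        ≤ ∑ i, ∑ j, ‖(starRingEnd ℂ (c i) * (c j * (inner ℂ (y i) (y j) : ℂ)))‖ := by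
          refine le_trans (norm_sum_le _ _) ?_
          exact Finset.sum_le_sum fun i _ => norm_sum_le _ _
      _ ≤ ∑ i, ∑ j, M ^ 2 * ‖((inner ℂ (y i) (y j) : ℂ))‖ := by
          refine Finset.sum_le_sum fun i _ => Finset.sum_le_sum fun j _ => ?_
          rw [norm_mul, norm_mul, Complex.norm_conj]
          have hci : ‖(c i)‖ = ‖((inner ℂ x (y i) : ℂ))‖ := by
            rw [hc]; exact Complex.norm_conj _
          have hcj : ‖(c j)‖ = ‖((inner ℂ x (y j) : ℂ))‖ := by
            rw [hc]; exact Complex.norm_conj _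
          have hrw : M ^ 2 * ‖((inner ℂ (y i) (y j) : ℂ))‖
              = M * (M * ‖((inner ℂ (y i) (y j) : ℂ))‖) := by ring
          rw [hrw, hci, hcj]
          exact mul_le_mul (hle i)
            (mul_le_mul_of_nonneg_right (hle j) (norm_nonneg _))
            (by positivity) hMnn
      _ = M ^ 2 * T := by
          rw [hT, Finset.mul_sum]
          exact Finset.sum_congr rfl fun i _ => by rw [Finset.mul_sum]
  have hznorm : ‖z‖ ≤ M * T ^ ((1 : ℝ) / 2) := by
    have hsq : M * T ^ ((1 : ℝ) / 2) = Real.sqrt (M ^ 2 * T) := by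
      rw [Real.sqrt_mul (sq_nonneg M), Real.sqrt_sq hMnn, Real.sqrt_eq_rpow]
    rw [hsq, ← Real.sqrt_sq (norm_nonneg z)]
    exact Real.sqrt_le_sqrt hzz
  calc (∑ i, (‖((inner ℂ x (y i) : ℂ))‖) ^ 2) ≤ ‖x‖ * ‖z‖ := key1
    _ ≤ ‖x‖ * (M * T ^ ((1 : ℝ) / 2)) := mul_le_mul_of_nonneg_left hznorm (norm_nonneg x)
    _ = ‖x‖ * M * T ^ ((1 : ℝ) / 2) := by ring
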